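/- Let n ∈ S² with n₃ ≠ ±1, let ζ₊ = −(n₁ + i n₂)/(n₃ + 1), ζ₋ = −(n₁ + i n₂)/(n₃ − 1), and let ℓ ∈ ℕ. Then for every radius ε with 0 < ε < |ζ₊ − ζ₋|, (1/(2πi)) ∮_{|ζ−ζ₊|=ε} n(ζ)^{−ℓ−1} dζ = binom(2ℓ, ℓ) · (ζ₋ − ζ₊)^{−ℓ} = binom(2ℓ, ℓ) · ((n₁ − i n₂)/2)^ℓ. -/

import Mathlib

/-- `n(ζ) = (1/2)(n₁ + i n₂) + ζ n₃ − (1/2)(n₁ − i n₂) ζ²` as a function of `n ∈ ℝ³`. -/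
noncomputable def xz (ζ : ℂ) (n : Fin 3 → ℝ) : ℂ :=
  (1 / 2 : ℂ) * ((n 0 : ℂ) + Complex.I * (n 1 : ℂ)) + ζ * (n 2 : ℂ)
    - (1 / 2 : ℂ) * ((n 0 : ℂ) - Complex.I * (n 1 : ℂ)) * ζ ^ 2

open Metric

theorem negBinomialHasSum (u : ℂ) (hu : u ≠ 0) (ℓ : ℕ) (y : ℂ) (hy : ‖y‖ < ‖u‖) :
    HasSum (fun k : ℕ => y ^ k * ((-1) ^ k * (((k + ℓ).choose ℓ : ℕ) : ℂ)
        * u ^ (-(ℓ : ℤ) - 1 - (k : ℤ)))) ((u + y) ^ (-(ℓ : ℤ) - 1)) := by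
  have hupos : (0:ℝ) < ‖u‖ := norm_pos_iff.2 hu
  have hr : ‖-(y/u)‖ < 1 := by
    rw [norm_neg, norm_div, div_lt_one hupos]; exact hy
  have h := (hasSum_choose_mul_geometric_of_norm_lt_one ℓ hr).mul_left
      (u ^ (-(ℓ : ℤ) - 1))
  have huy : u + y ≠ 0 := by
    intro h0
    have hyu : y = -u := by linear_combination h0
    rw [hyu, norm_neg] at hy
    exact absurd hy (lt_irrefl _)
  convert h using 2 with k
  · rfl
  · rw [zpow_sub₀ hu, zpow_natCast]
    field_simp
    have e : u ^ k * (-(y / u)) ^ k = (y * -1) ^ k := by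
      rw [← mul_pow, mul_neg, mul_div_left_comm, div_self hu, mul_one, mul_neg_one]
    linear_combination (-(((k + ℓ).choose ℓ : ℕ) : ℂ)) * e
  · have hm : (-(ℓ : ℤ) - 1) = -((ℓ + 1 : ℕ) : ℤ) := by push_cast; ring
    rw [hm, zpow_neg, zpow_natCast, zpow_neg, zpow_natCast]
    have h1 : (1 : ℂ) - -(y/u) = (u+y)/u := by field_simp; ring
    rw [h1, div_pow]
    rw [div_div_eq_mul_div, one_mul, inv_mul_eq_div, div_div,
      mul_comm, ← div_div, div_self (pow_ne_zero _ hu), one_div]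

open Complex in
theorem cauchy_coeff (b c : ℂ) (ℓ : ℕ) (ε : ℝ) (hε : 0 < ε) (hε' : ε < ‖b - c‖) :
    (1 / (2 * (Real.pi : ℂ) * Complex.I)) *
      (∮ z in C(b, ε), (z - b) ^ (-(ℓ : ℤ) - 1) * (z - c) ^ (-(ℓ : ℤ) - 1)) =
    (-1) ^ ℓ * (((ℓ + ℓ).choose ℓ : ℕ) : ℂ) * (b - c) ^ (-(ℓ : ℤ) - 1 - (ℓ : ℤ)) := by
  obtain ⟨εn, rfl⟩ : ∃ x : NNReal, (x:ℝ) = ε := ⟨⟨ε, hε.le⟩, rfl⟩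
  set u : ℂ := b - c with hu_def
  have hupos : (0:ℝ) < ‖u‖ := lt_trans hε hε'
  have hu : u ≠ 0 := by intro h; rw [h] at hupos; simp at hupos
  set g : ℂ → ℂ := fun z => (z - c) ^ (-(ℓ : ℤ) - 1) with hg_def
  set q : FormalMultilinearSeries ℂ ℂ ℂ := fun k =>
    ContinuousMultilinearMap.mkPiRing ℂ (Fin k)
      ((-1) ^ k * (((k + ℓ).choose ℓ : ℕ) : ℂ) * u ^ (-(ℓ : ℤ) - 1 - (k : ℤ))) with hq_def
  have hnorm : ∀ k : ℕ, ‖q k‖ = ((k + ℓ).choose ℓ : ℝ) * ‖u‖ ^ (-(ℓ : ℤ) - 1 - (k : ℤ)) := by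
    intro k
    rw [hq_def]
    rw [ContinuousMultilinearMap.norm_mkPiRing]
    rw [norm_mul, norm_mul, norm_pow, norm_neg, norm_one, one_pow, one_mul,
      norm_zpow, Complex.norm_natCast]
  have hsummable : Summable fun k : ℕ => ‖q k‖ * (εn:ℝ) ^ k := by
    have hr : ‖(εn:ℝ) / ‖u‖‖ < 1 := by
      rw [Real.norm_eq_abs, _root_.abs_of_nonneg (div_nonneg hε.le hupos.le), div_lt_one hupos]
      exact hε'
    refine ((summable_choose_mul_geometric_of_norm_lt_one (R := ℝ) ℓ hr).mul_left
      (‖u‖ ^ (-(ℓ : ℤ) - 1))).congr fun k => ?_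
    rw [hnorm k, show (-(ℓ:ℤ) - 1 - (k:ℤ)) = (-(ℓ:ℤ)-1) + (-(k:ℤ)) by ring,
      zpow_add₀ (ne_of_gt hupos), zpow_neg, zpow_natCast]
    field_simp
    rw [div_pow, mul_assoc, div_mul_cancel₀ _ (pow_ne_zero _ (ne_of_gt hupos))]
  have hq : HasFPowerSeriesOnBall g q b (εn : ENNReal) := by
    refine ⟨q.le_radius_of_summable hsummable, by exact_mod_cast hε, fun hy => ?_⟩
    rename_i y
    rw [mem_emetric_ball_zero_iff] at hy
    have hy' : ‖y‖ < ‖u‖ := lt_trans (by exact_mod_cast hy) hε'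
    have h := negBinomialHasSum u hu ℓ y hy'
    have hbc : b + y - c = u + y := by rw [hu_def]; ring
    simp only [hq_def, ContinuousMultilinearMap.mkPiRing_apply, Finset.prod_const,
      Finset.card_univ, Fintype.card_fin, smul_eq_mul, hg_def, hbc]
    exact h
  have hg_diff : DifferentiableOn ℂ g (Metric.closedBall b (εn:ℝ)) := by
    intro z hz
    have hzc : z - c ≠ 0 := by
      intro h0
      have : z = c := by linear_combination h0
      rw [Metric.mem_closedBall, this] at hz
      rw [dist_eq_norm, show c - b = -u by rw [hu_def]; ring, norm_neg] at hz
      linarith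
    exact ((differentiableAt_id.sub_const c).zpow (Or.inl hzc)).differentiableWithinAt
  have heq : cauchyPowerSeries g b (εn:ℝ) = q :=
    ((hg_diff.hasFPowerSeriesOnBall (R := εn) (by exact_mod_cast hε)).hasFPowerSeriesAt).eq_formalMultilinearSeries
      hq.hasFPowerSeriesAt
  have hcoeff := congrFun heq ℓ
  have happ : cauchyPowerSeries g b (εn:ℝ) ℓ (fun _ => 1) = q ℓ (fun _ => 1) := by
    rw [hcoeff]
  rw [cauchyPowerSeries_apply] at happ
  simp only [hq_def, ContinuousMultilinearMap.mkPiRing_apply, Finset.prod_const,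
    Finset.card_univ, Fintype.card_fin, one_pow, smul_eq_mul, one_mul] at happ
  have hint : ∀ z : ℂ, ((1 : ℂ) / (z - b)) ^ ℓ * ((z - b)⁻¹ * g z)
      = (z - b) ^ (-(ℓ : ℤ) - 1) * g z := by
    intro z
    rcases eq_or_ne (z - b) 0 with h0 | h0
    · rw [h0]
      simp [zero_zpow _ (by omega : (-(ℓ : ℤ) - 1) ≠ 0)]
    · rw [one_div, inv_pow, ← zpow_natCast (z - b) ℓ, ← zpow_neg,
        show (z-b)⁻¹ = (z-b)^(-1 : ℤ) by rw [zpow_neg_one], ← mul_assoc,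
        ← zpow_add₀ h0]
      ring_nf
  simp only [hint, hg_def] at happ
  rw [one_div]
  simp only [hg_def] at hint
  simp only [hint] at happ
  exact happ


/-- For a unit vector `n ∈ S²` with `n₃ ≠ ±1`, roots `ζ₊, ζ₋` of `n(ζ)`, `ℓ ∈ ℕ` and
`0 < ε < |ζ₊ − ζ₋|`, the circle integral of `n(ζ)^{−ℓ−1}` around `ζ₊` satisfies
`(1/(2πi)) ∮ n(ζ)^{−ℓ−1} dζ = C(2ℓ,ℓ) (ζ₋ − ζ₊)^{−ℓ} = C(2ℓ,ℓ) ((n₁ − i n₂)/2)^ℓ`. -/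
theorem circle_integral_inv_pow_n_zeta (n : Fin 3 → ℝ)
    (hn : n 0 ^ 2 + n 1 ^ 2 + n 2 ^ 2 = 1)
    (h1 : n 2 ≠ 1) (h2 : n 2 ≠ -1)
    (ζp ζm : ℂ)
    (hζp : ζp = -(((n 0 : ℂ) + Complex.I * (n 1 : ℂ))) / ((n 2 : ℂ) + 1))
    (hζm : ζm = -(((n 0 : ℂ) + Complex.I * (n 1 : ℂ))) / ((n 2 : ℂ) - 1))
    (ℓ : ℕ) (ε : ℝ) (hε : 0 < ε) (hε' : ε < ‖ζp - ζm‖) :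
    (1 / (2 * (Real.pi : ℂ) * Complex.I)) *
        (∮ ζ in C(ζp, ε), xz ζ n ^ (-(ℓ : ℤ) - 1)) =
      ((2 * ℓ).choose ℓ : ℂ) * (ζm - ζp) ^ (-(ℓ : ℤ)) ∧
    (1 / (2 * (Real.pi : ℂ) * Complex.I)) *
        (∮ ζ in C(ζp, ε), xz ζ n ^ (-(ℓ : ℤ) - 1)) =
      ((2 * ℓ).choose ℓ : ℂ) * ((((n 0 : ℂ) - Complex.I * (n 1 : ℂ))) / 2) ^ ℓ := by
  have hden1 : ((n 2 : ℂ) + 1) ≠ 0 := by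
    intro h
    exact h2 (by exact_mod_cast eq_neg_of_add_eq_zero_left h)
  have hden2 : ((n 2 : ℂ) - 1) ≠ 0 := by
    intro h
    exact h1 (by exact_mod_cast sub_eq_zero.mp h)
  have hsum : ((n 0 : ℂ))^2 + (n 1 : ℂ)^2 + (n 2 : ℂ)^2 = 1 := by exact_mod_cast hn
  set a : ℂ := -(((n 0 : ℂ) - Complex.I * (n 1 : ℂ))/2) with ha_def
  set u : ℂ := ζp - ζm with hu_def
  have hau : a * u = 1 := by
    rw [ha_def, hu_def, hζp, hζm]
    field_simp
    linear_combination (-2:ℂ) * hsum + 2*(n 1:ℂ)^2 * Complex.I_sq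
  have hupos : (0:ℝ) < ‖u‖ := lt_trans hε (by simpa using hε')
  have hu : u ≠ 0 := by intro h; rw [h] at hupos; simp at hupos
  have ha : a = u⁻¹ := eq_inv_of_mul_eq_one_left hau
  have hfact : ∀ ζ : ℂ, xz ζ n = a * (ζ - ζp) * (ζ - ζm) := by
    intro ζ
    rw [ha_def, hζp, hζm]
    unfold xz
    field_simp
    linear_combination ((n 0:ℂ) + Complex.I*(n 1:ℂ) + 2*ζ*(n 2:ℂ)) * hsum -
      ((n 0:ℂ) + Complex.I*(n 1:ℂ) + 2*ζ*(n 2:ℂ)) * (n 1:ℂ)^2 * Complex.I_sq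
  have key := cauchy_coeff ζp ζm ℓ ε hε (by simpa using hε')
  have hfun : (fun ζ => xz ζ n ^ (-(ℓ : ℤ) - 1)) =
      fun ζ => a ^ (-(ℓ : ℤ) - 1) •
        ((ζ - ζp) ^ (-(ℓ : ℤ) - 1) * (ζ - ζm) ^ (-(ℓ : ℤ) - 1)) := by
    funext ζ
    rw [hfact ζ, smul_eq_mul, mul_zpow, mul_zpow]
    ring
  have hI : (∮ ζ in C(ζp, ε), xz ζ n ^ (-(ℓ : ℤ) - 1)) =
      a ^ (-(ℓ : ℤ) - 1) •
        ∮ ζ in C(ζp, ε), (ζ - ζp) ^ (-(ℓ : ℤ) - 1) * (ζ - ζm) ^ (-(ℓ : ℤ) - 1) := by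
    rw [hfun]
    exact circleIntegral.integral_smul _ _ _ _
  have h₁ : (1 / (2 * (Real.pi : ℂ) * Complex.I)) *
      (∮ ζ in C(ζp, ε), xz ζ n ^ (-(ℓ : ℤ) - 1)) =
      ((2 * ℓ).choose ℓ : ℂ) * (ζm - ζp) ^ (-(ℓ : ℤ)) := by
    have e2 : (-u) ^ (-(ℓ:ℤ)) = (-1)^ℓ * u ^ (-(ℓ:ℤ)) := by
      rw [zpow_neg, zpow_neg, zpow_natCast, zpow_natCast, neg_pow, mul_inv,
        show ((-1:ℂ)^ℓ)⁻¹ = (-1)^ℓ by rw [← inv_pow, inv_neg, inv_one]]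
    have e1 : u ^ (-(-(ℓ:ℤ) - 1)) * u ^ (-(ℓ:ℤ) - 1 - (ℓ:ℤ)) = u ^ (-(ℓ:ℤ)) := by
      rw [← zpow_add₀ hu]; congr 1; ring
    rw [hI, smul_eq_mul, ← mul_assoc, mul_comm _ (a ^ (-(ℓ : ℤ) - 1)), mul_assoc, key]
    rw [ha, inv_zpow, ← zpow_neg, ← hu_def]
    rw [show ζm - ζp = -u by rw [hu_def]; ring, e2,
      show (2*ℓ).choose ℓ = (ℓ+ℓ).choose ℓ by rw [two_mul]]
    linear_combination ((-1:ℂ)^ℓ * (((ℓ+ℓ).choose ℓ : ℕ):ℂ)) * e1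
  refine ⟨h₁, h₁.trans ?_⟩
  have hinv : (ζm - ζp)⁻¹ = ((n 0 : ℂ) - Complex.I * (n 1 : ℂ))/2 := by
    refine inv_eq_of_mul_eq_one_right ?_
    have : ζm - ζp = -u := by rw [hu_def]; ring
    rw [this, ha_def] at *
    linear_combination hau
  rw [zpow_neg, zpow_natCast, ← inv_pow, hinv]
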